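/- Second-moment error metric decomposition: in an optimal Bayesian inference model with prior rows i.i.d. and bounded support, n^{−2} E‖X Xᵀ − ⟨x xᵀ⟩₀‖_F² = E[(X₁ᵀ X₂)²] − E⟨‖Q‖_F²⟩₀ + O(1/n), where X₁, X₂ ∈ ℝ^K are the first two rows of X, Q = n^{−1} Xᵀ x is the overlap matrix, ⟨−⟩₀ is the posterior expectation and E the expectation over the quenched variables; i.e. the difference between the left-hand side and E[(X₁ᵀX₂)²] − E⟨‖Q‖_F²⟩₀ is bounded in absolute value by C/n for some constant C independent of n. -/

import Mathlib

open MeasureTheory ProbabilityTheory Filter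

noncomputable section

/-- Squared Frobenius norm of a matrix. -/
def frobSq {m k : ℕ} (M : Matrix (Fin m) (Fin k) ℝ) : ℝ := ∑ i, ∑ j, (M i j) ^ 2

open scoped Classical in
/-- The unique positive square root of a positive semidefinite matrix (junk value `0` otherwise). -/
def matSqrt {K : ℕ} (A : Matrix (Fin K) (Fin K) ℝ) : Matrix (Fin K) (Fin K) ℝ :=
  if h : A.PosSemidef then
    (h.1.eigenvectorUnitary : Matrix (Fin K) (Fin K) ℝ) *
      Matrix.diagonal (RCLike.ofReal ∘ Real.sqrt ∘ h.1.eigenvalues : Fin K → ℝ) *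
      (star h.1.eigenvectorUnitary : Matrix (Fin K) (Fin K) ℝ) else 0

/-- Overlap matrix `Q = n⁻¹ Xᵀ x` between the signal `X` and a posterior sample `x`. -/
def overlap {n K : ℕ} (X x : Fin n → Fin K → ℝ) : Matrix (Fin K) (Fin K) ℝ :=
  (n : ℝ)⁻¹ • ((Matrix.of X).transpose * Matrix.of x)

/-- The perturbing Hamiltonian `H_λ(x, Y) = ½‖x λ^{1/2}‖_F² − Tr(Yᵀ x λ^{1/2})`. -/
def pertH {n K : ℕ} (lam : Matrix (Fin K) (Fin K) ℝ) (x Y : Fin n → Fin K → ℝ) : ℝ :=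
  (1 / 2 : ℝ) * frobSq (Matrix.of x * matSqrt lam)
    - ((Matrix.of Y).transpose * (Matrix.of x * matSqrt lam)).trace

open scoped Classical in
/-- Elementary symmetric direction matrix corresponding to the independent entry
`λ_{ll'} = λ_{l'l}` of a symmetric matrix `λ`. -/
def symBasis {K : ℕ} (l l' : Fin K) : Matrix (Fin K) (Fin K) ℝ :=
  fun a b => if (a = l ∧ b = l') ∨ (a = l' ∧ b = l) then 1 else 0

/-- `L = n⁻¹ ∇_λ H_λ(x,Y)`: the gradient of the perturbing Hamiltonian with respect to the
`K(K+1)/2` independent entries of the symmetric matrix `λ`. -/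
def Lmat {n K : ℕ} (lam : Matrix (Fin K) (Fin K) ℝ) (x Y : Fin n → Fin K → ℝ) :
    Matrix (Fin K) (Fin K) ℝ :=
  fun l l' => (n : ℝ)⁻¹ * deriv (fun t : ℝ => pertH (lam + t • symBasis l l') x Y) 0

/-- The set `D_K` of symmetric SNR matrices with off-diagonal entries in `(1,2)` and diagonal
entries in `(2K, 2K+1)`. -/
def DK (K : ℕ) : Set (Matrix (Fin K) (Fin K) ℝ) :=
  {A | (∀ k l, A k l = A l k) ∧ (∀ k l, k ≠ l → A k l ∈ Set.Ioo (1 : ℝ) 2) ∧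
    (∀ k, A k k ∈ Set.Ioo (2 * K : ℝ) (2 * K + 1))}

/-- `D_{n,K} = s_n · D_K`. -/
def DnK (s : ℝ) (K : ℕ) : Set (Matrix (Fin K) (Fin K) ℝ) := (fun A => s • A) '' DK K

/-- Index set for the `K(K+1)/2` independent entries of a symmetric `K×K` matrix. -/
abbrev SymIdx (K : ℕ) := {q : Fin K × Fin K // q.1 ≤ q.2}

open scoped Classical in
/-- The symmetric matrix built from its independent entries. -/
def symOfParam {K : ℕ} (p : SymIdx K → ℝ) : Matrix (Fin K) (Fin K) ℝ :=
  fun k l => if h : k ≤ l then p ⟨(k, l), h⟩ else p ⟨(l, k), le_of_not_ge h⟩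

/-- The set of independent entries describing `D_K`: the uniform average over it realizes the
average `E_λ` over `D_{n,K}` (after the rescaling `λ = s_n λ̃`). -/
def paramSet (K : ℕ) : Set (SymIdx K → ℝ) :=
  {p | ∀ q : SymIdx K,
    (q.1.1 = q.1.2 → p q ∈ Set.Ioo (2 * K : ℝ) (2 * K + 1)) ∧
    (q.1.1 ≠ q.1.2 → p q ∈ Set.Ioo (1 : ℝ) 2)}

/-- Entrywise expectation of a matrix-valued function. -/
def mExp {α : Type*} [MeasurableSpace α] (μ : Measure α) {k l : ℕ}
    (f : α → Matrix (Fin k) (Fin l) ℝ) : Matrix (Fin k) (Fin l) ℝ :=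
  fun a b => ∫ x, f x a b ∂μ

/-- The side information `Y = X λ^{1/2} + Z` of the vectorial Gaussian channel. -/
def sideInfo {n K : ℕ} (lam : Matrix (Fin K) (Fin K) ℝ) (x z : Fin n → Fin K → ℝ) :
    Fin n → Fin K → ℝ :=
  fun i k => (Matrix.of x * matSqrt lam) i k + z i k

/-- The posterior of the perturbed model: the (regular version of the) conditional law of the
signal `X` given the data `(θ, Ỹ, Y)` where `Y = X λ^{1/2} + Z`. -/
def posterior {n K : ℕ} {Ω Θ' Y' : Type} [MeasurableSpace Ω] [MeasurableSpace Θ']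
    [MeasurableSpace Y'] (P : Measure Ω) [IsFiniteMeasure P]
    (X : Ω → (Fin n → Fin K → ℝ)) (θ : Ω → Θ') (Yt : Ω → Y') (Z : Ω → (Fin n → Fin K → ℝ))
    (lam : Matrix (Fin K) (Fin K) ℝ) (ω : Ω) : Measure (Fin n → Fin K → ℝ) :=
  (condDistrib X (fun ω' => (θ ω', Yt ω', sideInfo lam (X ω') (Z ω'))) P)
    (θ ω, Yt ω, sideInfo lam (X ω) (Z ω))


/-- The posterior mean `⟨x⟩` of the signal under a posterior measure. -/
def postMean {n K : ℕ} (μ : Measure (Fin n → Fin K → ℝ)) : Fin n → Fin K → ℝ :=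
  fun i k => ∫ x, x i k ∂μ
section helpers
variable {Ω' α' : Type*} [MeasurableSpace Ω'] [MeasurableSpace α']
variable {E : Type*} [MeasurableSpace E] [StandardBorelSpace E] [Nonempty E]

lemma my_integrable_of_abs_le {μ : Measure α'} [IsFiniteMeasure μ] {f : α' → ℝ}
    (hf : AEStronglyMeasurable f μ) {c : ℝ} (h : ∀ᵐ a ∂μ, |f a| ≤ c) : Integrable f μ :=
  ⟨hf, HasFiniteIntegral.of_bounded (by simpa [Real.norm_eq_abs] using h)⟩

lemma my_abs_integral_le {μ : Measure α'} [IsProbabilityMeasure μ] {f : α' → ℝ} {c : ℝ}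
    (h : ∀ x, |f x| ≤ c) : |∫ x, f x ∂μ| ≤ c := by
  have h2 := norm_integral_le_of_norm_le_const (μ := μ) (C := c)
    (Filter.Eventually.of_forall (fun x => by rw [Real.norm_eq_abs]; exact h x))
  rw [Real.norm_eq_abs, probReal_univ, mul_one] at h2
  exact h2

lemma my_pair_eq_compProd (P : Measure Ω') [IsFiniteMeasure P]
    {Y : Ω' → E} {T : Ω' → α'} (hY : Measurable Y) (hT : Measurable T) :
    P.map (fun ω => (T ω, Y ω)) = (P.map T) ⊗ₘ condDistrib Y T P := by
  rw [condDistrib]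
  conv_lhs => rw [← Measure.disintegrate (ρ := P.map fun ω => (T ω, Y ω))
    (ρCond := (P.map fun ω => (T ω, Y ω)).condKernel)]
  rw [Measure.fst_map_prodMk₀ hY.aemeasurable]

lemma my_condDistrib_null (P : Measure Ω') [IsProbabilityMeasure P]
    {Y : Ω' → E} {T : Ω' → α'} (hY : Measurable Y) (hT : Measurable T)
    {B : Set E} (hB : MeasurableSet B) (hmem : ∀ ω, Y ω ∈ B) :
    ∀ᵐ ω ∂P, condDistrib Y T P (T ω) Bᶜ = 0 := by
  have h0 : ∫⁻ t, condDistrib Y T P t Bᶜ ∂(P.map T) = 0 := by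
    have happ : ((P.map T) ⊗ₘ condDistrib Y T P) (Set.univ ×ˢ Bᶜ) = 0 := by
      rw [← my_pair_eq_compProd P hY hT,
        Measure.map_apply (hT.prodMk hY) (MeasurableSet.univ.prod hB.compl)]
      have : (fun ω => (T ω, Y ω)) ⁻¹' (Set.univ ×ˢ Bᶜ) = ∅ := by
        ext ω; simp [hmem ω]
      simp [this]
    rw [Measure.compProd_apply (MeasurableSet.univ.prod hB.compl)] at happ
    rw [← happ]
    refine lintegral_congr fun t => ?_
    congr 1
    ext x; simp
  have hmeas : Measurable fun t => condDistrib Y T P t Bᶜ :=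
    Kernel.measurable_coe _ hB.compl
  exact ae_of_ae_map hT.aemeasurable ((lintegral_eq_zero_iff hmeas).mp h0)

lemma my_tower (P : Measure Ω') [IsProbabilityMeasure P]
    {Y : Ω' → E} {T : Ω' → α'} (hY : Measurable Y) (hT : Measurable T)
    {g : E → ℝ} (hg : Measurable g) {c : ℝ} (hgb : ∀ x, |g x| ≤ c)
    {G : α' → ℝ} (hG : Measurable G) {c' : ℝ} (hGb : ∀ t, |G t| ≤ c') :
    ∫ ω, g (Y ω) * G (T ω) ∂P
      = ∫ ω, (∫ x, g x ∂condDistrib Y T P (T ω)) * G (T ω) ∂P := by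
  set κ := condDistrib Y T P with hκ
  have hTY : Measurable fun ω => (T ω, Y ω) := hT.prodMk hY
  haveI : IsProbabilityMeasure (P.map T) := Measure.isProbabilityMeasure_map hT.aemeasurable
  have hf : Measurable fun p : α' × E => g p.2 * G p.1 :=
    (hg.comp measurable_snd).mul (hG.comp measurable_fst)
  have hint : Integrable (fun p : α' × E => g p.2 * G p.1) ((P.map T) ⊗ₘ κ) := by
    refine my_integrable_of_abs_le hf.aestronglyMeasurable (c := c * c')
      (Filter.Eventually.of_forall fun p => ?_)
    rw [abs_mul]
    exact mul_le_mul (hgb _) (hGb _) (abs_nonneg _)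
      (le_trans (abs_nonneg (g p.2)) (hgb p.2))
  have hGmeas : StronglyMeasurable fun t : α' => ∫ x, g x ∂κ t :=
    (hg.stronglyMeasurable.comp_measurable measurable_snd).integral_kernel_prod_right'
      (κ := κ)
  calc ∫ ω, g (Y ω) * G (T ω) ∂P
      = ∫ p, g p.2 * G p.1 ∂(P.map fun ω => (T ω, Y ω)) :=
        (integral_map hTY.aemeasurable hf.aestronglyMeasurable).symm
    _ = ∫ p, g p.2 * G p.1 ∂((P.map T) ⊗ₘ κ) := by rw [my_pair_eq_compProd P hY hT]
    _ = ∫ t, ∫ x, g x * G t ∂κ t ∂(P.map T) := Measure.integral_compProd hint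
    _ = ∫ t, (∫ x, g x ∂κ t) * G t ∂(P.map T) := by
        simp_rw [integral_mul_const]
    _ = ∫ ω, (∫ x, g x ∂κ (T ω)) * G (T ω) ∂P :=
        integral_map hT.aemeasurable
          ((hGmeas.mul hG.stronglyMeasurable).aestronglyMeasurable)

lemma my_sum4 {n K : ℕ} (t : Fin n → Fin n → Fin K → Fin K → ℝ) :
    ∑ k, ∑ l, ∑ i, ∑ j, t i j k l = ∑ i, ∑ j, ∑ k, ∑ l, t i j k l := by
  calc ∑ k, ∑ l, ∑ i, ∑ j, t i j k l
      = ∑ k, ∑ i, ∑ l, ∑ j, t i j k l :=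
        Finset.sum_congr rfl fun k _ => Finset.sum_comm ..
    _ = ∑ i, ∑ k, ∑ l, ∑ j, t i j k l := Finset.sum_comm ..
    _ = ∑ i, ∑ k, ∑ j, ∑ l, t i j k l :=
        Finset.sum_congr rfl fun i _ => Finset.sum_congr rfl fun k _ => Finset.sum_comm ..
    _ = ∑ i, ∑ j, ∑ k, ∑ l, t i j k l :=
        Finset.sum_congr rfl fun i _ => Finset.sum_comm ..

lemma my_frobSq_overlap {n K : ℕ} (X x : Fin n → Fin K → ℝ) :
    frobSq (overlap X x)
      = ((n : ℝ)⁻¹) ^ 2 * ∑ i, ∑ j, (∑ k, X i k * X j k) * (∑ k, x i k * x j k) := by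
  unfold frobSq overlap
  simp only [Matrix.smul_apply, Matrix.mul_apply, Matrix.transpose_apply, Matrix.of_apply,
    smul_eq_mul, mul_pow]
  simp_rw [← Finset.mul_sum]
  congr 1
  have h1 : ∀ k l : Fin K, (∑ i, X i k * x i l) ^ 2
      = ∑ i, ∑ j, (X i k * x i l) * (X j k * x j l) := by
    intro k l; rw [sq, Finset.sum_mul_sum]
  simp_rw [h1]
  rw [my_sum4 (fun i j k l => (X i k * x i l) * (X j k * x j l))]
  refine Finset.sum_congr rfl fun i _ => Finset.sum_congr rfl fun j _ => ?_
  rw [Finset.sum_mul_sum]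
  refine Finset.sum_congr rfl fun k _ => Finset.sum_congr rfl fun l _ => by ring

lemma my_exists_perm {n : ℕ} {a b i j : Fin n} (hab : a ≠ b) (hij : i ≠ j) :
    ∃ σ : Equiv.Perm (Fin n), σ a = i ∧ σ b = j := by
  set j' := Equiv.swap a i j with hj'
  have haj' : a ≠ j' := by
    intro h
    apply hij
    have : Equiv.swap a i a = Equiv.swap a i j' := by rw [← h]
    rw [Equiv.swap_apply_left, hj', Equiv.swap_apply_self] at this
    exact this
  refine ⟨(Equiv.swap b j').trans (Equiv.swap a i), ?_, ?_⟩
  · simp only [Equiv.trans_apply]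
    rw [Equiv.swap_apply_of_ne_of_ne hab haj', Equiv.swap_apply_left]
  · simp only [Equiv.trans_apply]
    rw [Equiv.swap_apply_left, hj', Equiv.swap_apply_self]

lemma my_pi_exchange {n K : ℕ} (p0 : Measure (Fin K → ℝ)) [IsProbabilityMeasure p0]
    {i j a b : Fin n} (hij : i ≠ j) (hab : a ≠ b) (F : (Fin K → ℝ) → (Fin K → ℝ) → ℝ) :
    ∫ v, F (v i) (v j) ∂(Measure.pi fun _ : Fin n => p0)
      = ∫ v, F (v a) (v b) ∂(Measure.pi fun _ : Fin n => p0) := by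
  obtain ⟨σ, hσa, hσb⟩ := my_exists_perm hab hij
  have hmp := measurePreserving_piCongrLeft (fun _ : Fin n => p0) σ
  have hemb :=
    (MeasurableEquiv.piCongrLeft (fun _ : Fin n => (Fin K → ℝ)) σ).measurableEmbedding
  have hcomp := hmp.integral_comp hemb (fun v => F (v i) (v j))
  rw [← hcomp]
  refine integral_congr_ae (Filter.Eventually.of_forall fun w => ?_)
  simp only [MeasurableEquiv.coe_piCongrLeft]
  rw [← hσa, ← hσb]
  rw [Equiv.piCongrLeft_apply_apply, Equiv.piCongrLeft_apply_apply]

end helpers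

lemma my_core {n K : ℕ} {S : ℝ} (hS : 0 < S)
    {Ω Θ' Y' : Type*} [MeasurableSpace Ω] [MeasurableSpace Θ'] [MeasurableSpace Y']
    (P : Measure Ω) [IsProbabilityMeasure P]
    (X : Ω → (Fin n → Fin K → ℝ)) (θ : Ω → Θ') (Yt : Ω → Y')
    (hX : Measurable X) (hXb : ∀ ω i k, |X ω i k| ≤ S)
    (hθ : Measurable θ) (hYt : Measurable Yt) (hn : 1 ≤ n) :
    ∫ ω, frobSq (Matrix.of (fun i j : Fin n =>
        (∑ k, X ω i k * X ω j k)
          - ∫ x, (∑ k, x i k * x j k)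
              ∂(condDistrib X (fun ω' => (θ ω', Yt ω')) P (θ ω, Yt ω)))) ∂P
      = (∑ i, ∑ j, ∫ ω, (∑ k, X ω i k * X ω j k) ^ 2 ∂P)
        - (n : ℝ) ^ 2 * ∫ ω, ∫ x, frobSq (overlap (X ω) x)
            ∂(condDistrib X (fun ω' => (θ ω', Yt ω')) P (θ ω, Yt ω)) ∂P := by
  classical
  set c : ℝ := K * S ^ 2 with hc
  have hc0 : 0 ≤ c := by positivity
  have hDm : Measurable (fun ω => (θ ω, Yt ω)) := hθ.prodMk hYt
  set κ : Kernel (Θ' × Y') (Fin n → Fin K → ℝ) :=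
    condDistrib X (fun ω' => (θ ω', Yt ω')) P with hκ
  -- clipping
  set Φ : (Fin n → Fin K → ℝ) → (Fin n → Fin K → ℝ) :=
    fun x i k => max (-S) (min S (x i k)) with hΦ
  have hΦm : Measurable Φ :=
    measurable_pi_lambda _ fun i => measurable_pi_lambda _ fun k =>
      measurable_const.max (measurable_const.min
        ((measurable_pi_apply k).comp (measurable_pi_apply i)))
  have hΦb : ∀ x i k, |Φ x i k| ≤ S := by
    intro x i k
    rw [abs_le]
    refine ⟨le_max_left _ _, max_le (by linarith) (min_le_left _ _)⟩
  have hΦid : ∀ x : Fin n → Fin K → ℝ, (∀ i k, |x i k| ≤ S) → Φ x = x := by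
    intro x hx; funext i k
    have h := hx i k; rw [abs_le] at h
    simp only [hΦ]
    rw [min_eq_right h.2, max_eq_right h.1]
  -- g'
  have hgm : ∀ i j : Fin n, Measurable (fun x : Fin n → Fin K → ℝ => ∑ k, x i k * x j k) :=
    fun i j => Finset.measurable_sum _ fun k _ =>
      Measurable.mul (f := fun x : Fin n → Fin K → ℝ => x i k) (g := fun x => x j k)
        ((measurable_pi_apply k).comp (measurable_pi_apply i))
        ((measurable_pi_apply k).comp (measurable_pi_apply j))
  set g' : Fin n → Fin n → (Fin n → Fin K → ℝ) → ℝ :=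
    fun i j x => ∑ k, Φ x i k * Φ x j k with hg'
  have hg'm : ∀ i j, Measurable (g' i j) := fun i j => (hgm i j).comp hΦm
  have hg'b : ∀ i j x, |g' i j x| ≤ c := by
    intro i j x
    calc |∑ k, Φ x i k * Φ x j k| ≤ ∑ k, |Φ x i k * Φ x j k| :=
          Finset.abs_sum_le_sum_abs _ _
      _ ≤ ∑ _k : Fin K, S ^ 2 := Finset.sum_le_sum fun k _ => by
            rw [abs_mul, sq]
            exact mul_le_mul (hΦb x i k) (hΦb x j k) (abs_nonneg _) hS.le
      _ = c := by
            rw [Finset.sum_const, Finset.card_univ, Fintype.card_fin, nsmul_eq_mul, hc]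
  have hg'X : ∀ i j ω, g' i j (X ω) = ∑ k, X ω i k * X ω j k := by
    intro i j ω
    simp only [hg']
    rw [hΦid (X ω) (hXb ω)]
  have hgXb : ∀ i j ω, |∑ k, X ω i k * X ω j k| ≤ c := by
    intro i j ω; rw [← hg'X i j ω]; exact hg'b i j (X ω)
  -- G
  set G : Fin n → Fin n → (Θ' × Y') → ℝ := fun i j t => ∫ x, g' i j x ∂κ t with hG
  have hGm : ∀ i j, Measurable (G i j) := fun i j =>
    (((hg'm i j).stronglyMeasurable.comp_measurable
      measurable_snd).integral_kernel_prod_right' (κ := κ)).measurable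
  have hGb : ∀ i j t, |G i j t| ≤ c := fun i j t => my_abs_integral_le (hg'b i j)
  -- concentration
  set B : Set (Fin n → Fin K → ℝ) := {x | ∀ i k, |x i k| ≤ S} with hBdef
  have hB : MeasurableSet B := by
    have hBeq : B = ⋂ i, ⋂ k, {x : Fin n → Fin K → ℝ | |x i k| ≤ S} := by
      ext x; simp [hBdef, Set.mem_iInter]
    rw [hBeq]
    exact MeasurableSet.iInter fun i => MeasurableSet.iInter fun k =>
      measurableSet_le ((measurable_pi_apply k).comp (measurable_pi_apply i)).abs
        measurable_const
  have haeB : ∀ᵐ ω ∂P, ∀ᵐ x ∂κ (θ ω, Yt ω), x ∈ B := by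
    filter_upwards [my_condDistrib_null P hX hDm hB (fun ω => hXb ω)] with ω h
    rw [ae_iff]
    exact h
  -- tower
  have htow : ∀ i j : Fin n,
      ∫ ω, g' i j (X ω) * G i j (θ ω, Yt ω) ∂P
        = ∫ ω, G i j (θ ω, Yt ω) ^ 2 ∂P := by
    intro i j
    calc ∫ ω, g' i j (X ω) * G i j (θ ω, Yt ω) ∂P
        = ∫ ω, (∫ x, g' i j x ∂κ (θ ω, Yt ω)) * G i j (θ ω, Yt ω) ∂P :=
          my_tower P hX hDm (hg'm i j) (hg'b i j) (hGm i j) (hGb i j)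
      _ = ∫ ω, G i j (θ ω, Yt ω) ^ 2 ∂P := by
          refine integral_congr_ae (Filter.Eventually.of_forall fun ω => ?_)
          simp only [sq]
          rfl
  -- integrability helpers
  have hMint : ∀ (f : Ω → ℝ), Measurable f → ∀ (c' : ℝ), (∀ ω, |f ω| ≤ c') → Integrable f P :=
    fun f hf c' hb => my_integrable_of_abs_le hf.aestronglyMeasurable
      (Filter.Eventually.of_forall hb)
  have hGDm : ∀ i j, Measurable fun ω => G i j (θ ω, Yt ω) := fun i j => (hGm i j).comp hDm
  have hgXm : ∀ i j, Measurable fun ω => g' i j (X ω) := fun i j => (hg'm i j).comp hX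
  have int1 : ∀ i j : Fin n, Integrable (fun ω => g' i j (X ω) ^ 2) P := fun i j =>
    hMint _ ((hgXm i j).pow_const 2) (c ^ 2) (fun ω => by
      rw [abs_pow]
      exact pow_le_pow_left₀ (abs_nonneg _) (hg'b i j (X ω)) 2)
  have int2 : ∀ i j : Fin n, Integrable (fun ω => g' i j (X ω) * G i j (θ ω, Yt ω)) P :=
    fun i j => hMint _ ((hgXm i j).mul (hGDm i j)) (c * c) (fun ω => by
      rw [abs_mul]
      exact mul_le_mul (hg'b i j (X ω)) (hGb i j _) (abs_nonneg _)
        (le_trans (abs_nonneg _) (hg'b i j (X ω))))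
  have int3 : ∀ i j : Fin n, Integrable (fun ω => G i j (θ ω, Yt ω) ^ 2) P := fun i j =>
    hMint _ ((hGDm i j).pow_const 2) (c ^ 2) (fun ω => by
      rw [abs_pow]
      exact pow_le_pow_left₀ (abs_nonneg _) (hGb i j _) 2)
  have hint_sq : ∀ i j : Fin n,
      Integrable (fun ω => (g' i j (X ω) - G i j (θ ω, Yt ω)) ^ 2) P := by
    intro i j
    refine hMint _ (((hgXm i j).sub (hGDm i j)).pow_const 2) ((2 * c) ^ 2) fun ω => ?_
    rw [abs_pow]
    refine pow_le_pow_left₀ (abs_nonneg _) ?_ 2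
    calc |g' i j (X ω) - G i j (θ ω, Yt ω)|
        ≤ |g' i j (X ω)| + |G i j (θ ω, Yt ω)| := abs_sub _ _
      _ ≤ 2 * c := by
          have h1 := hg'b i j (X ω); have h2 := hGb i j (θ ω, Yt ω); linarith
  -- per-term identity
  have hterm : ∀ i j : Fin n,
      ∫ ω, (g' i j (X ω) - G i j (θ ω, Yt ω)) ^ 2 ∂P
        = (∫ ω, g' i j (X ω) ^ 2 ∂P) - ∫ ω, G i j (θ ω, Yt ω) ^ 2 ∂P := by
    intro i j
    calc ∫ ω, (g' i j (X ω) - G i j (θ ω, Yt ω)) ^ 2 ∂P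
        = ∫ ω, (g' i j (X ω) ^ 2 - 2 * (g' i j (X ω) * G i j (θ ω, Yt ω)))
            + G i j (θ ω, Yt ω) ^ 2 ∂P := by
          refine integral_congr_ae (Filter.Eventually.of_forall fun ω => ?_)
          ring
      _ = (∫ ω, g' i j (X ω) ^ 2 - 2 * (g' i j (X ω) * G i j (θ ω, Yt ω)) ∂P)
            + ∫ ω, G i j (θ ω, Yt ω) ^ 2 ∂P :=
          integral_add ((int1 i j).sub ((int2 i j).const_mul 2)) (int3 i j)
      _ = ((∫ ω, g' i j (X ω) ^ 2 ∂P) - ∫ ω, 2 * (g' i j (X ω) * G i j (θ ω, Yt ω)) ∂P)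
            + ∫ ω, G i j (θ ω, Yt ω) ^ 2 ∂P := by
          rw [integral_sub (int1 i j) ((int2 i j).const_mul 2)]
      _ = (∫ ω, g' i j (X ω) ^ 2 ∂P) - ∫ ω, G i j (θ ω, Yt ω) ^ 2 ∂P := by
          rw [integral_const_mul, htow i j]
          ring
  -- expansion of frobSq of the error matrix
  have hps : ∀ᵐ ω ∂P, frobSq (Matrix.of (fun i j : Fin n =>
      (∑ k, X ω i k * X ω j k) - ∫ x, (∑ k, x i k * x j k) ∂κ (θ ω, Yt ω)))
      = ∑ i, ∑ j, (g' i j (X ω) - G i j (θ ω, Yt ω)) ^ 2 := by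
    filter_upwards [haeB] with ω hω
    simp only [frobSq, Matrix.of_apply]
    refine Finset.sum_congr rfl fun i _ => Finset.sum_congr rfl fun j _ => ?_
    congr 2
    · exact (hg'X i j ω).symm
    · refine integral_congr_ae ?_
      filter_upwards [hω] with x hx
      simp only [hg']
      rw [hΦid x hx]
  have hT1 : ∫ ω, frobSq (Matrix.of (fun i j : Fin n =>
      (∑ k, X ω i k * X ω j k) - ∫ x, (∑ k, x i k * x j k) ∂κ (θ ω, Yt ω))) ∂P
      = (∑ i, ∑ j, ∫ ω, (∑ k, X ω i k * X ω j k) ^ 2 ∂P)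
        - ∑ i, ∑ j, ∫ ω, G i j (θ ω, Yt ω) ^ 2 ∂P := by
    rw [integral_congr_ae hps,
      integral_finset_sum _ (fun i _ => integrable_finset_sum _ fun j _ => hint_sq i j)]
    calc ∑ i, ∫ ω, ∑ j, (g' i j (X ω) - G i j (θ ω, Yt ω)) ^ 2 ∂P
        = ∑ i, ∑ j, ∫ ω, (g' i j (X ω) - G i j (θ ω, Yt ω)) ^ 2 ∂P :=
          Finset.sum_congr rfl fun i _ =>
            integral_finset_sum _ fun j _ => hint_sq i j
      _ = ∑ i, ∑ j, ((∫ ω, g' i j (X ω) ^ 2 ∂P) - ∫ ω, G i j (θ ω, Yt ω) ^ 2 ∂P) :=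
          Finset.sum_congr rfl fun i _ => Finset.sum_congr rfl fun j _ => hterm i j
      _ = (∑ i, ∑ j, ∫ ω, g' i j (X ω) ^ 2 ∂P)
            - ∑ i, ∑ j, ∫ ω, G i j (θ ω, Yt ω) ^ 2 ∂P := by
          simp [Finset.sum_sub_distrib]
      _ = (∑ i, ∑ j, ∫ ω, (∑ k, X ω i k * X ω j k) ^ 2 ∂P)
            - ∑ i, ∑ j, ∫ ω, G i j (θ ω, Yt ω) ^ 2 ∂P := by
          congr 1
          refine Finset.sum_congr rfl fun i _ => Finset.sum_congr rfl fun j _ => ?_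
          refine integral_congr_ae (Filter.Eventually.of_forall fun ω => ?_)
          simp only [hg'X i j ω]
  -- inner overlap integral
  have hT3 : ∫ ω, ∫ x, frobSq (overlap (X ω) x) ∂κ (θ ω, Yt ω) ∂P
      = ((n : ℝ)⁻¹) ^ 2 * ∑ i, ∑ j, ∫ ω, G i j (θ ω, Yt ω) ^ 2 ∂P := by
    have hin : ∀ᵐ ω ∂P, ∫ x, frobSq (overlap (X ω) x) ∂κ (θ ω, Yt ω)
        = ((n : ℝ)⁻¹) ^ 2 * ∑ i, ∑ j, g' i j (X ω) * G i j (θ ω, Yt ω) := by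
      filter_upwards [haeB] with ω hω
      have hκint : ∀ i j : Fin n,
          Integrable (fun x => g' i j (X ω) * g' i j x) (κ (θ ω, Yt ω)) := by
        intro i j
        refine my_integrable_of_abs_le
          (((hg'm i j).const_mul _).aestronglyMeasurable)
          (c := c * c) (Filter.Eventually.of_forall fun x => ?_)
        rw [abs_mul]
        exact mul_le_mul (hg'b i j (X ω)) (hg'b i j x) (abs_nonneg _)
          (le_trans (abs_nonneg _) (hg'b i j (X ω)))
      calc ∫ x, frobSq (overlap (X ω) x) ∂κ (θ ω, Yt ω)
          = ∫ x, ((n : ℝ)⁻¹) ^ 2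
              * ∑ i, ∑ j, g' i j (X ω) * g' i j x ∂κ (θ ω, Yt ω) := by
            refine integral_congr_ae ?_
            filter_upwards [hω] with x hx
            rw [my_frobSq_overlap]
            congr 1
            refine Finset.sum_congr rfl fun i _ => Finset.sum_congr rfl fun j _ => ?_
            rw [← hg'X i j ω]
            congr 1
            simp only [hg']
            rw [hΦid x hx]
        _ = ((n : ℝ)⁻¹) ^ 2 * ∫ x, ∑ i, ∑ j, g' i j (X ω) * g' i j x ∂κ (θ ω, Yt ω) :=
            integral_const_mul _ _
        _ = ((n : ℝ)⁻¹) ^ 2 * ∑ i, ∑ j, g' i j (X ω) * G i j (θ ω, Yt ω) := by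
            congr 1
            rw [integral_finset_sum _ (fun i _ => integrable_finset_sum _ fun j _ =>
              hκint i j)]
            refine Finset.sum_congr rfl fun i _ => ?_
            rw [integral_finset_sum _ (fun j _ => hκint i j)]
            refine Finset.sum_congr rfl fun j _ => ?_
            rw [integral_const_mul]
    rw [integral_congr_ae hin, integral_const_mul]
    congr 1
    rw [integral_finset_sum _ (fun i _ => integrable_finset_sum _ fun j _ => int2 i j)]
    refine Finset.sum_congr rfl fun i _ => ?_
    rw [integral_finset_sum _ (fun j _ => int2 i j)]
    exact Finset.sum_congr rfl fun j _ => htow i j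
  -- combine
  rw [hT1, hT3]
  have hne : ((n : ℝ)) ≠ 0 := by
    have : (0 : ℝ) < n := by exact_mod_cast hn
    linarith
  congr 1
  rw [← mul_assoc]
  rw [show (n : ℝ) ^ 2 * ((n : ℝ)⁻¹) ^ 2 = 1 by
    rw [← mul_pow, mul_inv_cancel₀ hne, one_pow]]
  rw [one_mul]



lemma my_exchange {n K : ℕ} {Ω : Type*} [MeasurableSpace Ω] (P : Measure Ω)
    [IsProbabilityMeasure P] (X : Ω → (Fin n → Fin K → ℝ)) (hX : Measurable X)
    (p0 : Measure (Fin K → ℝ)) [IsProbabilityMeasure p0]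
    (hrows : P.map (fun ω => fun i : Fin n => fun k => X ω i k)
      = Measure.pi fun _ : Fin n => p0)
    {i j a b : Fin n} (hij : i ≠ j) (hab : a ≠ b) :
    ∫ ω, (∑ k, X ω i k * X ω j k) ^ 2 ∂P = ∫ ω, (∑ k, X ω a k * X ω b k) ^ 2 ∂P := by
  have hm : ∀ (i j : Fin n),
      Measurable (fun v : Fin n → Fin K → ℝ => (∑ k, v i k * v j k) ^ 2) := fun i j =>
    (Finset.measurable_sum _ fun k _ =>
      ((measurable_pi_apply k).comp (measurable_pi_apply i)).mul
        ((measurable_pi_apply k).comp (measurable_pi_apply j))).pow_const 2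
  have key : ∀ (i j : Fin n), ∫ ω, (∑ k, X ω i k * X ω j k) ^ 2 ∂P
      = ∫ v, (∑ k, v i k * v j k) ^ 2 ∂(Measure.pi fun _ : Fin n => p0) := by
    intro i j
    rw [← hrows]
    exact (integral_map hX.aemeasurable (hm i j).aestronglyMeasurable).symm
  rw [key i j, key a b]
  exact my_pi_exchange p0 hij hab (fun u w => (∑ k, u k * w k) ^ 2)

lemma my_sum_bound {K : ℕ} {S : ℝ} (hS : 0 ≤ S) (u w : Fin K → ℝ)
    (hu : ∀ k, |u k| ≤ S) (hw : ∀ k, |w k| ≤ S) : |∑ k, u k * w k| ≤ K * S ^ 2 := by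
  calc |∑ k, u k * w k| ≤ ∑ k, |u k * w k| := Finset.abs_sum_le_sum_abs _ _
    _ ≤ ∑ _k : Fin K, S ^ 2 := Finset.sum_le_sum fun k _ => by
        rw [abs_mul, sq]
        exact mul_le_mul (hu k) (hw k) (abs_nonneg _) hS
    _ = K * S ^ 2 := by
        rw [Finset.sum_const, Finset.card_univ, Fintype.card_fin, nsmul_eq_mul]

lemma my_sum_split {n : ℕ} (hn : 1 ≤ n) (A : Fin n → Fin n → ℝ) (v : ℝ)
    (hoff : ∀ i j, i ≠ j → A i j = v) :
    ∑ i, ∑ j, A i j = (∑ i, A i i) + (n : ℝ) * ((n : ℝ) - 1) * v := by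
  have h1 : ∀ i : Fin n, ∑ j, A i j = A i i + ((n : ℝ) - 1) * v := by
    intro i
    rw [← Finset.add_sum_erase _ _ (Finset.mem_univ i)]
    congr 1
    rw [Finset.sum_congr rfl (fun j hj => hoff i j (Finset.ne_of_mem_erase hj).symm),
      Finset.sum_const, Finset.card_erase_of_mem (Finset.mem_univ i), Finset.card_univ,
      Fintype.card_fin, nsmul_eq_mul, Nat.cast_sub hn, Nat.cast_one]
  rw [Finset.sum_congr rfl fun i _ => h1 i, Finset.sum_add_distrib, Finset.sum_const,
    Finset.card_univ, Fintype.card_fin, nsmul_eq_mul]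
  ring

lemma my_final {N c0 s v w C : ℝ} (hN : 2 ≤ N) (hc : 0 ≤ c0) (hs : |s| ≤ N * c0 ^ 2)
    (hv : |v| ≤ c0 ^ 2) (hC : 2 * c0 ^ 2 + 1 ≤ C) :
    |(N ^ 2)⁻¹ * ((s + N * (N - 1) * v) - N ^ 2 * w) - (v - w)| ≤ C / N := by
  have hN0 : 0 < N := by linarith
  have hne : N ≠ 0 := ne_of_gt hN0
  have hval : (N ^ 2)⁻¹ * ((s + N * (N - 1) * v) - N ^ 2 * w) - (v - w)
      = (N ^ 2)⁻¹ * s - N⁻¹ * v := by field_simp; ring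
  rw [hval]
  have h1 : |(N ^ 2)⁻¹ * s - N⁻¹ * v| ≤ (N ^ 2)⁻¹ * |s| + N⁻¹ * |v| := by
    calc |(N ^ 2)⁻¹ * s - N⁻¹ * v| ≤ |(N ^ 2)⁻¹ * s| + |N⁻¹ * v| := abs_sub _ _
      _ = (N ^ 2)⁻¹ * |s| + N⁻¹ * |v| := by
          rw [abs_mul, abs_mul, abs_of_nonneg (by positivity : (0:ℝ) ≤ (N ^ 2)⁻¹),
            abs_of_nonneg (by positivity : (0:ℝ) ≤ N⁻¹)]
  refine h1.trans ?_
  have e2 : (N ^ 2)⁻¹ * (N * c0 ^ 2) + N⁻¹ * c0 ^ 2 = 2 * c0 ^ 2 / N := by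
    field_simp; ring
  have h3 : (N ^ 2)⁻¹ * |s| + N⁻¹ * |v| ≤ 2 * c0 ^ 2 / N := by
    rw [← e2]
    exact add_le_add (mul_le_mul_of_nonneg_left hs (by positivity))
      (mul_le_mul_of_nonneg_left hv (by positivity))
  refine h3.trans ?_
  exact (div_le_div_iff_of_pos_right hN0).mpr (by linarith)

/-- **Second-moment error metric decomposition**: in an optimal Bayesian inference model with
i.i.d. prior rows of bounded support,
`n⁻² E‖XXᵀ − ⟨xxᵀ⟩₀‖_F² = E[(X₁ᵀX₂)²] − E⟨‖Q‖_F²⟩₀ + O(1/n)`. -/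
theorem second_moment_metric_decomposition
    {K : ℕ} (hK : 0 < K) {S : ℝ} (hS : 0 < S)
    {Ω Θ' Y' : Type} [MeasurableSpace Ω] [MeasurableSpace Θ'] [MeasurableSpace Y']
    (P : Measure Ω) [IsProbabilityMeasure P]
    (X : ∀ n : ℕ, Ω → (Fin n → Fin K → ℝ))
    (θ : ℕ → Ω → Θ') (Yt : ℕ → Ω → Y')
    (hX : ∀ n, Measurable (X n)) (hXb : ∀ n ω i k, |X n ω i k| ≤ S)
    (hθ : ∀ n, Measurable (θ n)) (hYt : ∀ n, Measurable (Yt n))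
    -- the rows of the signal are i.i.d. with law `p0` supported in `[-S,S]^K`
    (p0 : Measure (Fin K → ℝ)) (hp0 : IsProbabilityMeasure p0)
    (hp0supp : ∀ᵐ v ∂p0, ∀ k, |v k| ≤ S)
    (hrows : ∀ n, P.map (fun ω => fun i : Fin n => fun k => X n ω i k)
      = Measure.pi fun _ : Fin n => p0) :
    ∃ C > 0, ∀ (n : ℕ) (hn2 : 2 ≤ n),
      |((n : ℝ) ^ 2)⁻¹ * (∫ ω, frobSq (Matrix.of (fun i j : Fin n =>
            (∑ k, X n ω i k * X n ω j k)
              - ∫ x, (∑ k, x i k * x j k)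
                  ∂(condDistrib (X n) (fun ω' => (θ n ω', Yt n ω')) P (θ n ω, Yt n ω)))) ∂P)
        - ((∫ ω, (∑ k, X n ω ⟨0, by omega⟩ k * X n ω ⟨1, by omega⟩ k) ^ 2 ∂P)
          - ∫ ω, ∫ x, frobSq (overlap (X n ω) x)
              ∂(condDistrib (X n) (fun ω' => (θ n ω', Yt n ω')) P (θ n ω, Yt n ω)) ∂P)|
      ≤ C / n := by
  classical
  refine ⟨2 * ((K : ℝ) * S ^ 2) ^ 2 + 1, by positivity, ?_⟩
  intro n hn2
  haveI := hp0
  have hn1 : 1 ≤ n := by omega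
  have hbound : ∀ i j : Fin n,
      |∫ ω, (∑ k, X n ω i k * X n ω j k) ^ 2 ∂P| ≤ ((K : ℝ) * S ^ 2) ^ 2 := by
    intro i j
    refine my_abs_integral_le fun ω => ?_
    rw [abs_pow]
    exact pow_le_pow_left₀ (abs_nonneg _)
      (my_sum_bound hS.le _ _ (fun k => hXb n ω i k) (fun k => hXb n ω j k)) 2
  have hz : (⟨0, by omega⟩ : Fin n) ≠ (⟨1, by omega⟩ : Fin n) := by
    intro h
    simpa using congrArg Fin.val h
  have hex : ∀ i j : Fin n, i ≠ j →
      (fun i j : Fin n => ∫ ω, (∑ k, X n ω i k * X n ω j k) ^ 2 ∂P) i j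
        = ∫ ω, (∑ k, X n ω ⟨0, by omega⟩ k * X n ω ⟨1, by omega⟩ k) ^ 2 ∂P :=
    fun i j hij => my_exchange P (X n) (hX n) p0 (hrows n) hij hz
  have hcore := my_core hS P (X n) (θ n) (Yt n) (hX n) (hXb n) (hθ n) (hYt n) hn1
  rw [hcore, my_sum_split hn1 _ _ hex]
  have hN : (2 : ℝ) ≤ (n : ℝ) := by exact_mod_cast hn2
  have hs : |∑ i : Fin n, ∫ ω, (∑ k, X n ω i k * X n ω i k) ^ 2 ∂P|
      ≤ (n : ℝ) * ((K : ℝ) * S ^ 2) ^ 2 := by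
    refine (Finset.abs_sum_le_sum_abs _ _).trans ?_
    calc ∑ i : Fin n, |∫ ω, (∑ k, X n ω i k * X n ω i k) ^ 2 ∂P|
        ≤ ∑ _i : Fin n, ((K : ℝ) * S ^ 2) ^ 2 :=
          Finset.sum_le_sum fun i _ => hbound i i
      _ = (n : ℝ) * ((K : ℝ) * S ^ 2) ^ 2 := by
          rw [Finset.sum_const, Finset.card_univ, Fintype.card_fin, nsmul_eq_mul]
  exact my_final hN (by positivity) hs (hbound _ _) le_rfl

end
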